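/- Let K be a field of characteristic p > 0, L/K a finite purely inseparable field extension, and x_1, …, x_n a Pickert generating sequence for L/K with exponent sequence e_1 ≥ ⋯ ≥ e_n. Then the monomials x_1^{r_1} x_2^{r_2} ⋯ x_n^{r_n} with 0 ≤ r_i < p^{e_i} form a basis of L as a K-vector space; in particular [L : K] = p^{e_1 + ⋯ + e_n}. -/

import Mathlib

variable {K L : Type*} [Field K] [Field L] [Algebra K L]

/-- `exp[x : F]`: the least `m` with `x ^ p ^ m ∈ F`. -/
noncomputable def pExp (p : ℕ) (F : IntermediateField K L) (x : L) : ℕ :=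
  sInf {m | x ^ p ^ m ∈ F}

/-- The exponent of `F` over `E`: the least `m` with `F ^ (p ^ m) ⊆ E`. -/
noncomputable def pExtExp (p : ℕ) (E F : IntermediateField K L) : ℕ :=
  sInf {m | ∀ y ∈ F, y ^ p ^ m ∈ E}

/-- `K(x₀, …, x_{i-1})`, the field generated over `K` by the first `i` terms of `x`. -/
def firstAdjoin (K : Type*) {L : Type*} [Field K] [Field L] [Algebra K L]
    {n : ℕ} (x : Fin n → L) (i : ℕ) : IntermediateField K L :=
  IntermediateField.adjoin K (x '' {j | (j : ℕ) < i})

/-- `x₀, …, x_{n-1}` is a p-basis of `L/K`: `L = K(Lᵖ)(x₀, …, x_{n-1})` and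
`[L : K(Lᵖ)] = pⁿ`. -/
def IsPBasis (p : ℕ) (K : Type*) {L : Type*} [Field K] [Field L] [Algebra K L]
    {n : ℕ} (x : Fin n → L) : Prop :=
  IntermediateField.adjoin K ((Set.range fun y : L => y ^ p) ∪ Set.range x) = ⊤ ∧
  Module.finrank ↥(IntermediateField.adjoin K (Set.range fun y : L => y ^ p)) L = p ^ n

/-- A Pickert generating sequence: a p-basis ordered so that for each `i`,
`exp[K(x₀…xᵢ) : K(x₀…x_{i-1})] = exp[xᵢ : K(x₀…x_{i-1})]`. -/
def IsPickertSeq (p : ℕ) (K : Type*) {L : Type*} [Field K] [Field L] [Algebra K L]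
    {n : ℕ} (x : Fin n → L) : Prop :=
  IsPBasis p K x ∧
  ∀ i : Fin n,
    pExtExp p (firstAdjoin K x i) (firstAdjoin K x ((i : ℕ) + 1)) =
      pExp p (firstAdjoin K x i) (x i)

/-- The exponent sequence `eᵢ := exp[xᵢ : K(x₀,…,x_{i-1})]` of a sequence `x`. -/
noncomputable def pickertExp (p : ℕ) (K : Type*) {L : Type*} [Field K] [Field L]
    [Algebra K L] {n : ℕ} (x : Fin n → L) (i : Fin n) : ℕ :=
  pExp p (firstAdjoin K x i) (x i)

open Polynomial


/-- The minimal polynomial of a purely inseparable element has degree `p ^ e`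
where `e` is the exponent of the element. -/
theorem minpoly_natDegree_pexp {F L : Type*} [Field F] [Field L] [Algebra F L]
    {p : ℕ} (hp : p.Prime) [CharP F p] {x : L} {e : ℕ}
    (h1 : x ^ p ^ e ∈ (algebraMap F L).range)
    (h2 : ∀ k, k < e → x ^ p ^ k ∉ (algebraMap F L).range) :
    IsIntegral F x ∧ (minpoly F x).natDegree = p ^ e := by
  haveI : CharP L p := charP_of_injective_ringHom (algebraMap F L).injective p
  haveI : ExpChar L p := ExpChar.prime hp
  haveI : ExpChar L[X] p := expChar_of_injective_ringHom C_injective p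
  obtain ⟨a, ha⟩ := h1
  have hpe : p ^ e ≠ 0 := pow_ne_zero _ hp.pos.ne'
  have hg : (X ^ p ^ e - C a : F[X]).Monic := monic_X_pow_sub_C a hpe
  have haev : Polynomial.aeval x (X ^ p ^ e - C a : F[X]) = 0 := by
    rw [map_sub, map_pow, aeval_X, aeval_C, ha, sub_self]
  have hint : IsIntegral F x := ⟨_, hg, by rw [← Polynomial.aeval_def]; exact haev⟩
  have hdvd := minpoly.dvd F x haev
  have hle : (minpoly F x).natDegree ≤ p ^ e := by
    simpa [natDegree_X_pow_sub_C] using natDegree_le_of_dvd hdvd hg.ne_zero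
  refine ⟨hint, le_antisymm hle ?_⟩
  set f := minpoly F x with hf
  set k := f.natDegree with hk
  have hk0 : 0 < k := minpoly.natDegree_pos hint
  have hmapdvd : f.map (algebraMap F L) ∣ (X - C x) ^ p ^ e := by
    have hmg : (X ^ p ^ e - C a : F[X]).map (algebraMap F L) = (X - C x) ^ p ^ e := by
      rw [Polynomial.map_sub, Polynomial.map_pow, Polynomial.map_X, Polynomial.map_C, ha,
        sub_pow_expChar_pow, ← C_pow]
    exact hmg ▸ Polynomial.map_dvd (algebraMap F L) hdvd
  obtain ⟨j, hjle, hassoc⟩ := (dvd_prime_pow (prime_X_sub_C x) _).mp hmapdvd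
  have hmapeq : f.map (algebraMap F L) = (X - C x) ^ j :=
    eq_of_monic_of_associated ((minpoly.monic hint).map _) ((monic_X_sub_C x).pow _) hassoc
  have hjk : j = k := by
    have := congrArg natDegree hmapeq
    rwa [natDegree_map, natDegree_pow, natDegree_X_sub_C, mul_one, ← hk, eq_comm] at this
  subst hjk
  set d := k.factorization p with hd
  set u := k / p ^ d with hu
  have hud : p ^ d * u = k := Nat.ordProj_mul_ordCompl_eq_self k p
  have hu0 : 0 < u := Nat.ordCompl_pos p hk0.ne'
  have hpu : ¬ p ∣ u := Nat.not_dvd_ordCompl hp hk0.ne'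
  have hexp : (X - C x) ^ k = (Polynomial.expand L (p ^ d)) ((X - C (x ^ p ^ d)) ^ u) := by
    rw [map_pow, map_sub, Polynomial.expand_X, Polynomial.expand_C, C_pow,
      ← sub_pow_expChar_pow, ← pow_mul, hud]
  have hcoeff : ((X - C x) ^ k).coeff (p ^ d * (u - 1)) = -((u : L) * x ^ p ^ d) := by
    rw [hexp, Polynomial.coeff_expand (pow_pos hp.pos d), if_pos ⟨u - 1, rfl⟩,
      Nat.mul_div_cancel_left _ (pow_pos hp.pos d)]
    rw [sub_eq_add_neg, ← C_neg, coeff_X_add_C_pow]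
    rw [Nat.sub_sub_self hu0, show u.choose (u - 1) = u by
      rw [← Nat.choose_symm (Nat.sub_le u 1), Nat.sub_sub_self hu0, Nat.choose_one_right]]
    ring
  have hcoeff2 : algebraMap F L (f.coeff (p ^ d * (u - 1))) = -((u : L) * x ^ p ^ d) := by
    rw [← Polynomial.coeff_map, hmapeq, hcoeff]
  have huF : ((u : F)) ≠ 0 := fun h => hpu ((CharP.cast_eq_zero_iff F p u).mp h)
  have huL : ((u : L)) ≠ 0 := by
    rw [show ((u : L)) = algebraMap F L (u : F) from (map_natCast _ _).symm]
    exact (map_ne_zero_iff _ (algebraMap F L).injective).mpr huF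
  have hmem : x ^ p ^ d ∈ (algebraMap F L).range := by
    refine ⟨-(f.coeff (p ^ d * (u - 1))) / (u : F), ?_⟩
    rw [map_div₀, map_neg, hcoeff2, map_natCast, neg_neg, mul_div_cancel_left₀ _ huL]
  have hde : e ≤ d := not_lt.mp fun hlt => h2 d hlt hmem
  calc p ^ e ≤ p ^ d := Nat.pow_le_pow_right hp.pos hde
    _ ≤ p ^ d * u := Nat.le_mul_of_pos_right _ hu0
    _ = k := hud


/-- A finite purely inseparable extension has bounded exponent. -/
theorem exists_uniform_pexp [FiniteDimensional K L] (p : ℕ) (hp : p.Prime) [CharP K p]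
    (hins : ∀ y : L, ∃ m : ℕ, y ^ p ^ m ∈ (algebraMap K L).range) :
    ∃ m : ℕ, ∀ y : L, y ^ p ^ m ∈ (algebraMap K L).range := by
  classical
  haveI : CharP L p := charP_of_injective_ringHom (algebraMap K L).injective p
  haveI : Fact p.Prime := ⟨hp⟩
  obtain ⟨s, hs⟩ := Module.finite_def.mp (inferInstance : Module.Finite K L)
  refine ⟨s.sup fun y => Nat.find (hins y), fun y => ?_⟩
  set m := s.sup fun y => Nat.find (hins y) with hm
  let E : Subalgebra K L :=
  { carrier := {y : L | y ^ p ^ m ∈ (algebraMap K L).range}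
    mul_mem' := fun {a b} ha hb => by
      simp only [Set.mem_setOf_eq, mul_pow] at *
      exact mul_mem ha hb
    one_mem' := by simp only [Set.mem_setOf_eq, one_pow]; exact one_mem _
    add_mem' := fun {a b} ha hb => by
      simp only [Set.mem_setOf_eq, add_pow_char_pow] at *
      exact add_mem ha hb
    zero_mem' := by
      simp only [Set.mem_setOf_eq, zero_pow (pow_ne_zero _ hp.pos.ne')]
      exact zero_mem _
    algebraMap_mem' := fun c => by
      simp only [Set.mem_setOf_eq, ← map_pow]
      exact ⟨c ^ p ^ m, rfl⟩ }
  have hsE : ∀ z ∈ s, z ∈ E := by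
    intro z hz
    have h1 : Nat.find (hins z) ≤ m := hm ▸ Finset.le_sup (f := fun y => Nat.find (hins y)) hz
    have h2 : z ^ p ^ Nat.find (hins z) ∈ (algebraMap K L).range := Nat.find_spec (hins z)
    show z ^ p ^ m ∈ (algebraMap K L).range
    rw [show p ^ m = p ^ Nat.find (hins z) * p ^ (m - Nat.find (hins z)) by
      rw [← pow_add, Nat.add_sub_cancel' h1], pow_mul]
    exact pow_mem h2 _
  have : y ∈ Submodule.span K (s : Set L) := by rw [hs]; trivial
  have hE : Submodule.span K (s : Set L) ≤ Subalgebra.toSubmodule E :=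
    Submodule.span_le.mpr hsE
  exact hE this

/-- If `L = K(Lᵖ)(x)` and `L/K` has bounded exponent, then `L = K(x)`. -/
theorem adjoin_range_eq_top (p : ℕ) (hp : p.Prime) [CharP K p] {n : ℕ} (x : Fin n → L)
    (htop : IntermediateField.adjoin K ((Set.range fun y : L => y ^ p) ∪ Set.range x) = ⊤)
    (m : ℕ) (hm : ∀ y : L, y ^ p ^ m ∈ (algebraMap K L).range) :
    IntermediateField.adjoin K (Set.range x) = ⊤ := by
  haveI : CharP L p := charP_of_injective_ringHom (algebraMap K L).injective p
  haveI : ExpChar L p := ExpChar.prime hp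
  set M := IntermediateField.adjoin K (Set.range x) with hM
  have key : ∀ k : ℕ, ∀ y : L,
      y ∈ M ⊔ IntermediateField.adjoin K (Set.range fun z : L => z ^ p ^ k) := by
    intro k
    induction k with
    | zero =>
      intro y
      have : y ∈ IntermediateField.adjoin K (Set.range fun z : L => z ^ p ^ 0) :=
        IntermediateField.subset_adjoin _ _ ⟨y, by simp⟩
      exact (le_sup_right :
        IntermediateField.adjoin K (Set.range fun z : L => z ^ p ^ 0) ≤ _) this
    | succ k ih =>
      have step : IntermediateField.adjoin K (Set.range fun z : L => z ^ p ^ k) ≤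
          M ⊔ IntermediateField.adjoin K (Set.range fun z : L => z ^ p ^ (k + 1)) := by
        rw [IntermediateField.adjoin_le_iff]
        rintro _ ⟨z, rfl⟩
        set W := M ⊔ IntermediateField.adjoin K (Set.range fun z : L => z ^ p ^ (k + 1)) with hW
        have hz : z ∈ (⊤ : IntermediateField K L) := trivial
        rw [← htop] at hz
        have hz2 : z ∈ Subfield.closure (Set.range (algebraMap K L) ∪
            ((Set.range fun y : L => y ^ p) ∪ Set.range x)) := hz
        have hsub : (Set.range (algebraMap K L) ∪
            ((Set.range fun y : L => y ^ p) ∪ Set.range x)) ⊆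
            ↑(W.toSubfield.comap (iterateFrobenius L p k)) := by
          rintro w (⟨c, rfl⟩ | ⟨y, rfl⟩ | ⟨i, rfl⟩) <;>
            refine Subfield.mem_comap.mpr ?_
          · show (iterateFrobenius L p k) (algebraMap K L c) ∈ W.toSubfield
            rw [iterateFrobenius_def, ← map_pow]
            exact W.algebraMap_mem _
          · show (iterateFrobenius L p k) (y ^ p) ∈ W.toSubfield
            rw [iterateFrobenius_def, ← pow_mul, show p * p ^ k = p ^ (k + 1) from
              (pow_succ' p k).symm]
            exact (le_sup_right :
              IntermediateField.adjoin K (Set.range fun z : L => z ^ p ^ (k + 1)) ≤ W)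
              (IntermediateField.subset_adjoin _ _ ⟨y, rfl⟩)
          · show (iterateFrobenius L p k) (x i) ∈ W.toSubfield
            rw [iterateFrobenius_def]
            exact pow_mem ((le_sup_left : M ≤ W)
              (IntermediateField.subset_adjoin _ _ ⟨i, rfl⟩)) _
        have := Subfield.closure_le.mpr hsub hz2
        have := Subfield.mem_comap.mp this
        rw [iterateFrobenius_def] at this
        exact this
      intro y
      exact (sup_le le_sup_left step) (ih y)
  have h2 : IntermediateField.adjoin K (Set.range fun z : L => z ^ p ^ m) ≤ M := by
    rw [IntermediateField.adjoin_le_iff]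
    rintro _ ⟨z, rfl⟩
    obtain ⟨c, hc⟩ := hm z
    show z ^ p ^ m ∈ M
    rw [← hc]
    exact M.algebraMap_mem c
  rw [eq_top_iff]
  intro y _
  have := key m y
  rwa [sup_eq_left.mpr h2] at this



theorem monomials_key :
    ∀ (n : ℕ) (x : Fin n → L) (d : Fin n → ℕ),
    (∀ i : Fin n, LinearIndependent ↥(firstAdjoin K x (i : ℕ))
      fun j : Fin (d i) => x i ^ (j : ℕ)) →
    (∀ i : Fin n, ∀ y ∈ firstAdjoin K x ((i : ℕ) + 1),
      y ∈ Submodule.span ↥(firstAdjoin K x (i : ℕ))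
        (Set.range fun j : Fin (d i) => x i ^ (j : ℕ))) →
    LinearIndependent K (fun r : (∀ i, Fin (d i)) => ∏ i, x i ^ ((r i : ℕ))) ∧
    ∀ y ∈ firstAdjoin K x n, y ∈ Submodule.span K
      (Set.range fun r : (∀ i, Fin (d i)) => ∏ i, x i ^ ((r i : ℕ))) := by
  intro n
  induction n with
  | zero =>
    intro x d _ _
    constructor
    · have hone : (fun r : (∀ i : Fin 0, Fin (d i)) => ∏ i, x i ^ ((r i : ℕ)))
          = fun _ => (1 : L) := by
        funext r; simp
      rw [hone]
      exact linearIndependent_unique_iff.mpr one_ne_zero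
    · intro y hy
      have hempty : x '' {j : Fin 0 | (j : ℕ) < 0} = (∅ : Set L) := by simp
      rw [firstAdjoin, hempty, IntermediateField.adjoin_empty, IntermediateField.mem_bot] at hy
      obtain ⟨c, rfl⟩ := hy
      have h1 : algebraMap K L c
          = c • (∏ i : Fin 0, x i ^ (((default : ∀ i : Fin 0, Fin (d i)) i : ℕ))) := by
        simp [Algebra.smul_def]
      rw [h1]
      exact Submodule.smul_mem _ _ (Submodule.subset_span ⟨default, rfl⟩)
  | succ n IH =>
    intro x d hli hspan
    have hF : ∀ i : ℕ, i ≤ n →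
        firstAdjoin K (fun i : Fin n => x i.castSucc) i = firstAdjoin K x i := by
      intro i hi
      simp only [firstAdjoin]
      congr 1
      ext z
      constructor
      · rintro ⟨j, hj, rfl⟩
        exact ⟨j.castSucc, by simpa using hj, rfl⟩
      · rintro ⟨j, hj, rfl⟩
        refine ⟨⟨(j : ℕ), lt_of_lt_of_le hj hi⟩, hj, ?_⟩
        exact congrArg x (Fin.ext rfl)
    have hli' : ∀ i : Fin n, LinearIndependent
        ↥(firstAdjoin K (fun i : Fin n => x i.castSucc) (i : ℕ))
        fun j : Fin (d i.castSucc) => x i.castSucc ^ (j : ℕ) := by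
      intro i
      have h := hli i.castSucc
      simp only [Fin.coe_castSucc] at h
      rw [hF (i : ℕ) i.isLt.le]
      exact h
    have hspan' : ∀ i : Fin n, ∀ y ∈ firstAdjoin K (fun i : Fin n => x i.castSucc) ((i : ℕ) + 1),
        y ∈ Submodule.span ↥(firstAdjoin K (fun i : Fin n => x i.castSucc) (i : ℕ))
          (Set.range fun j : Fin (d i.castSucc) => x i.castSucc ^ (j : ℕ)) := by
      intro i
      have h := hspan i.castSucc
      simp only [Fin.coe_castSucc] at h
      rw [hF ((i : ℕ) + 1) (by omega), hF (i : ℕ) i.isLt.le]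
      exact h
    obtain ⟨ihLI, ihSP⟩ := IH (fun i : Fin n => x i.castSucc) (fun i : Fin n => d i.castSucc)
      hli' hspan'
    have hsnoc_prod : ∀ (r' : ∀ i : Fin n, Fin (d i.castSucc)) (c : Fin (d (Fin.last n))),
        (∏ i : Fin (n + 1), x i ^ (((Fin.snoc r' c : ∀ i : Fin (n + 1), Fin (d i)) i : ℕ)))
          = (∏ i : Fin n, x i.castSucc ^ ((r' i : ℕ))) * x (Fin.last n) ^ (c : ℕ) := by
      intro r' c
      rw [Fin.prod_univ_castSucc]
      congr 1
      · exact Finset.prod_congr rfl fun i _ => by simp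
      · simp
    have hmonoF : ∀ r' : ∀ i : Fin n, Fin (d i.castSucc),
        (∏ i : Fin n, x i.castSucc ^ ((r' i : ℕ))) ∈ firstAdjoin K x n := by
      intro r'
      refine prod_mem fun i _ => ?_
      have hmem : x i.castSucc ∈ x '' {j : Fin (n + 1) | (j : ℕ) < n} :=
        ⟨i.castSucc, by simpa using i.isLt, rfl⟩
      exact pow_mem (IntermediateField.subset_adjoin _ _ hmem) _
    have hsum : ∀ f : (∀ i : Fin (n + 1), Fin (d i)) → L,
        ∑ r, f r = ∑ c : Fin (d (Fin.last n)), ∑ r' : ∀ i : Fin n, Fin (d i.castSucc),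
          f (Fin.snoc r' c) := fun f =>
      ((Fintype.sum_equiv (Fin.snocEquiv fun i => Fin (d i))
        (fun q => f (Fin.snoc q.2 q.1)) f fun q => rfl).symm).trans (Fintype.sum_prod_type _)
    constructor
    · rw [Fintype.linearIndependent_iff]
      intro g hg
      rw [hsum] at hg
      simp only [hsnoc_prod] at hg
      set Co : Fin (d (Fin.last n)) → L :=
        fun c => ∑ r' : ∀ i : Fin n, Fin (d i.castSucc),
          g (Fin.snoc r' c) • ∏ i : Fin n, x i.castSucc ^ ((r' i : ℕ)) with hCo
      simp only [← smul_mul_assoc, ← Finset.sum_mul] at hg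
      have hlast := hli (Fin.last n)
      simp only [Fin.val_last] at hlast
      have hCF : ∀ c, Co c ∈ firstAdjoin K x n := by
        intro c
        refine sum_mem fun r' _ => ?_
        rw [Algebra.smul_def]
        exact mul_mem (IntermediateField.algebraMap_mem _ _) (hmonoF r')
      have hzero : ∀ c, (⟨Co c, hCF c⟩ : ↥(firstAdjoin K x n)) = 0 := by
        apply Fintype.linearIndependent_iff.mp hlast
        have hsm : ∀ c, (⟨Co c, hCF c⟩ : ↥(firstAdjoin K x n)) • x (Fin.last n) ^ (c : ℕ)
            = Co c * x (Fin.last n) ^ (c : ℕ) := fun c => by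
          rw [Algebra.smul_def, IntermediateField.algebraMap_apply]
        simp only [hsm]
        exact hg
      have hC0 : ∀ c, Co c = 0 := fun c => congrArg Subtype.val (hzero c)
      have hg0 : ∀ (c : Fin (d (Fin.last n))) (r' : ∀ i : Fin n, Fin (d i.castSucc)),
          g (Fin.snoc r' c) = 0 := by
        intro c
        exact Fintype.linearIndependent_iff.mp ihLI (fun r' => g (Fin.snoc r' c)) (hC0 c)
      intro r
      have hr := hg0 (r (Fin.last n)) (Fin.init r)
      rwa [Fin.snoc_init_self] at hr
    · intro y hy
      have h1 := hspan (Fin.last n) y (by simpa using hy)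
      simp only [Fin.val_last] at h1
      rw [Submodule.mem_span_range_iff_exists_fun] at h1
      obtain ⟨c, hc⟩ := h1
      rw [← hc]
      refine Submodule.sum_mem _ fun j _ => ?_
      have hcj : ((c j : L)) ∈ firstAdjoin K x n := (c j).2
      have h2 := ihSP (c j : L) (by rw [hF n le_rfl]; exact hcj)
      rw [Submodule.mem_span_range_iff_exists_fun] at h2
      obtain ⟨a, ha⟩ := h2
      rw [Algebra.smul_def, IntermediateField.algebraMap_apply, ← ha, Finset.sum_mul]
      refine Submodule.sum_mem _ fun r' _ => ?_
      rw [smul_mul_assoc, ← hsnoc_prod r' j]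
      exact Submodule.smul_mem _ _ (Submodule.subset_span ⟨Fin.snoc r' j, rfl⟩)
/-- If `x₀, …, x_{n-1}` is a Pickert generating sequence for a finite
purely inseparable extension `L/K` with exponent sequence `e₀ ≥ ⋯ ≥ e_{n-1}`, then the
monomials `x₀^{r₀} ⋯ x_{n-1}^{r_{n-1}}` with `0 ≤ rᵢ < p^{eᵢ}` form a `K`-basis of
`L`; in particular `[L : K] = p^{e₀ + ⋯ + e_{n-1}}`. -/
theorem pickert_monomials_basis
    (K L : Type*) [Field K] [Field L] [Algebra K L] [FiniteDimensional K L]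
    (p : ℕ) (hp : p.Prime) [CharP K p]
    (hins : ∀ y : L, ∃ m : ℕ, y ^ p ^ m ∈ (algebraMap K L).range)
    (n : ℕ) (x : Fin n → L) (hx : IsPickertSeq p K x)
    (hdec : ∀ i j : Fin n, i ≤ j → pickertExp p K x j ≤ pickertExp p K x i) :
    (∃ b : Module.Basis (∀ i : Fin n, Fin (p ^ pickertExp p K x i)) K L,
      ∀ r, b r = ∏ i : Fin n, x i ^ ((r i : ℕ))) ∧
    Module.finrank K L = p ^ (∑ i : Fin n, pickertExp p K x i) := by
  classical
  haveI : CharP L p := charP_of_injective_ringHom (algebraMap K L).injective p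
  have hrange : ∀ (E : IntermediateField K L) (y : L),
      y ∈ (algebraMap ↥E L).range ↔ y ∈ E := by
    intro E y
    constructor
    · rintro ⟨z, rfl⟩; exact z.2
    · intro h; exact ⟨⟨y, h⟩, rfl⟩
  have hfacts : ∀ i : Fin n, IsIntegral ↥(firstAdjoin K x (i : ℕ)) (x i) ∧
      (minpoly ↥(firstAdjoin K x (i : ℕ)) (x i)).natDegree = p ^ pickertExp p K x i := by
    intro i
    haveI : CharP ↥(firstAdjoin K x (i : ℕ)) p :=
      charP_of_injective_ringHom (algebraMap K ↥(firstAdjoin K x (i : ℕ))).injective p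
    have hne : {m : ℕ | x i ^ p ^ m ∈ firstAdjoin K x (i : ℕ)}.Nonempty := by
      obtain ⟨m, hm⟩ := hins (x i)
      obtain ⟨c, hc⟩ := hm
      refine ⟨m, ?_⟩
      show x i ^ p ^ m ∈ firstAdjoin K x (i : ℕ)
      rw [← hc]
      exact (firstAdjoin K x (i : ℕ)).algebraMap_mem c
    have hmem : x i ^ p ^ (pickertExp p K x i) ∈ firstAdjoin K x (i : ℕ) := Nat.sInf_mem hne
    have hnot : ∀ k, k < pickertExp p K x i → x i ^ p ^ k ∉ firstAdjoin K x (i : ℕ) :=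
      fun k hk => Nat.notMem_of_lt_sInf hk
    exact minpoly_natDegree_pexp hp ((hrange _ _).mpr hmem)
      (fun k hk hmemk => hnot k hk ((hrange _ _).mp hmemk))
  have hli : ∀ i : Fin n, LinearIndependent ↥(firstAdjoin K x (i : ℕ))
      fun j : Fin (p ^ pickertExp p K x i) => x i ^ (j : ℕ) := by
    intro i
    have h := linearIndependent_pow (K := ↥(firstAdjoin K x (i : ℕ))) (x i)
    rwa [(hfacts i).2] at h
  have hspan : ∀ i : Fin n, ∀ y ∈ firstAdjoin K x ((i : ℕ) + 1),
      y ∈ Submodule.span ↥(firstAdjoin K x (i : ℕ))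
        (Set.range fun j : Fin (p ^ pickertExp p K x i) => x i ^ (j : ℕ)) := by
    intro i y hy
    have hle : firstAdjoin K x ((i : ℕ) + 1) ≤
        (IntermediateField.adjoin ↥(firstAdjoin K x (i : ℕ)) {x i}).restrictScalars K := by
      refine IntermediateField.adjoin_le_iff.mpr ?_
      rintro _ ⟨j, hj, rfl⟩
      rw [SetLike.mem_coe, IntermediateField.mem_restrictScalars]
      by_cases hji : (j : ℕ) < (i : ℕ)
      · have hxj : x j ∈ firstAdjoin K x (i : ℕ) :=
          IntermediateField.subset_adjoin _ _ ⟨j, hji, rfl⟩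
        have h2 := (IntermediateField.adjoin ↥(firstAdjoin K x (i : ℕ)) {x i}).algebraMap_mem
          ⟨x j, hxj⟩
        simpa using h2
      · have hj' : (j : ℕ) < (i : ℕ) + 1 := hj
        have : j = i := Fin.ext (by omega)
        rw [this]
        exact IntermediateField.subset_adjoin _ _ rfl
    have hy2 : y ∈ IntermediateField.adjoin ↥(firstAdjoin K x (i : ℕ)) {x i} :=
      (IntermediateField.mem_restrictScalars _).mp (hle hy)
    have hy3 : y ∈ Algebra.adjoin ↥(firstAdjoin K x (i : ℕ)) {x i} := by
      rw [← IntermediateField.adjoin_simple_toSubalgebra_of_isAlgebraic (hfacts i).1.isAlgebraic]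
      exact hy2
    rw [Algebra.adjoin_singleton_eq_range_aeval] at hy3
    obtain ⟨f, hf⟩ := hy3
    have h4 := IsIntegral.mem_span_pow (R := ↥(firstAdjoin K x (i : ℕ))) (hfacts i).1
      ⟨f, hf.symm⟩
    rwa [(hfacts i).2] at h4
  obtain ⟨hLI, hSP⟩ := monomials_key n x (fun i => p ^ pickertExp p K x i) hli hspan
  have hFtop : firstAdjoin K x n = ⊤ := by
    obtain ⟨m, hm⟩ := exists_uniform_pexp p hp hins
    have h1 : IntermediateField.adjoin K (Set.range x) = ⊤ :=
      adjoin_range_eq_top p hp x hx.1.1 m hm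
    have h2 : x '' {j : Fin n | (j : ℕ) < n} = Set.range x := by
      ext z
      constructor
      · rintro ⟨j, _, rfl⟩; exact ⟨j, rfl⟩
      · rintro ⟨j, rfl⟩; exact ⟨j, j.isLt, rfl⟩
    show IntermediateField.adjoin K (x '' {j : Fin n | (j : ℕ) < n}) = ⊤
    rw [h2, h1]
  have hspan_top : ⊤ ≤ Submodule.span K
      (Set.range fun r : (∀ i : Fin n, Fin (p ^ pickertExp p K x i)) =>
        ∏ i, x i ^ ((r i : ℕ))) :=
    fun y _ => hSP y (by rw [hFtop]; trivial)
  refine ⟨⟨Module.Basis.mk hLI hspan_top, fun r => Module.Basis.mk_apply hLI hspan_top r⟩, ?_⟩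
  rw [Module.finrank_eq_card_basis (Module.Basis.mk hLI hspan_top), Fintype.card_pi]
  simp only [Fintype.card_fin]
  exact Finset.prod_pow_eq_pow_sum Finset.univ (fun i => pickertExp p K x i) p
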